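/- Assume the sets I_1, …, I_{R−1} are initial segments I_i = [1:c_i] with α ≤ c_1 ≤ … ≤ c_{R−1} ≤ L, I_R = [1:L], and Σ_{i∈[1:R]} |I_i| = QR + L − α. Then for every s ∈ ℂ^{QR}, the absolute value of the determinant of J2(s) factorizes as |det(J2(s))| = |det(J4(s))| · Π_{i = c_{R−1}+1}^{L} |q_i^T s_R|. -/

import Mathlib

open Matrix Kronecker

noncomputable section

/-- The block-diagonal row-selection matrix `diag((I_L)_{I_1}, …, (I_L)_{I_R})` where
`I_m = [1 : sz m]` is an initial segment: row `(m, i)`, column `(m', j)` carries a `1`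
iff `m = m'` and `i = j`. -/
def selBlocks (L R : ℕ) (sz : Fin R → ℕ) :
    Matrix ((m : Fin R) × Fin (sz m)) (Fin R × Fin L) ℂ :=
  Matrix.of fun r mj => if r.1 = mj.1 ∧ (r.2 : ℕ) = (mj.2 : ℕ) then 1 else 0

/-- The vector `a_i = (I_R ⊗ diag(e_i) Q) s ∈ ℂ^{LR}`. -/
def aVec {L Q R : ℕ} (Qmat : Matrix (Fin L) (Fin Q) ℂ) (s : Fin R × Fin Q → ℂ)
    (i : Fin L) : Fin R × Fin L → ℂ :=
  ((1 : Matrix (Fin R) (Fin R) ℂ) ⊗ₖ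
    (Matrix.diagonal (fun j => if j = i then (1 : ℂ) else 0) * Qmat)).mulVec s

/-- The matrix `J2(s) = P [I_R ⊗ Q | a_{α+1} | … | a_L]`, where
`P = diag((I_L)_{I_1}, …, (I_L)_{I_R})`, `I_i = [1 : c (i-1)]` for `i ∈ [1:R−1]` and
`I_R = [1:L]`. Rows are indexed by `(m : Fin R) × Fin (if m < R-1 then c m else L)`,
columns by `(Fin R × Fin Q) ⊕ Fin (L − α)`; appended column `j` (0-based) is `a_{α+1+j}`
(1-based), i.e. `aVec` at the `Fin L`-index `α + j` (0-based). -/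
def J2 (L Q R α : ℕ) (Qmat : Matrix (Fin L) (Fin Q) ℂ) (c : ℕ → ℕ)
    (s : Fin R × Fin Q → ℂ) :
    Matrix ((m : Fin R) × Fin (if (m : ℕ) < R - 1 then c (m : ℕ) else L))
      ((Fin R × Fin Q) ⊕ Fin (L - α)) ℂ :=
  selBlocks L R (fun m => if (m : ℕ) < R - 1 then c (m : ℕ) else L) *
    Matrix.fromCols ((1 : Matrix (Fin R) (Fin R) ℂ) ⊗ₖ Qmat)
      (Matrix.of fun rj (j : Fin (L - α)) =>
        aVec Qmat s ⟨α + (j : ℕ), by have := j.2; omega⟩ rj)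

/-- The matrix `J4(s) = P1 [(I_R ⊗ Q) | a_{α+1} | … | a_{c_{R−1}}]`, where
`P1 = diag((I_L)_{I_1}, …, (I_L)_{I_{R−1}}, (I_L)_{I_{R−1}})` and `I_i = [1 : c (i-1)]`
(0-based: block `m` of `P1` has size `c (min m (R-2))`, so the last block is duplicated).
Rows are indexed by `(m : Fin R) × Fin (c (min m (R-2)))`, columns by
`(Fin R × Fin Q) ⊕ Fin (c (R-2) − α)`. -/
def J4 (L Q R α : ℕ) (Qmat : Matrix (Fin L) (Fin Q) ℂ) (c : ℕ → ℕ)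
    (s : Fin R × Fin Q → ℂ) :
    Matrix ((m : Fin R) × Fin (c (min (m : ℕ) (R - 2))))
      ((Fin R × Fin Q) ⊕ Fin (c (R - 2) - α)) ℂ :=
  selBlocks L R (fun m => c (min (m : ℕ) (R - 2))) *
    Matrix.fromCols ((1 : Matrix (Fin R) (Fin R) ℂ) ⊗ₖ Qmat)
      (Matrix.of fun rj (j : Fin (c (R - 2) - α)) =>
        if h : α + (j : ℕ) < L then aVec Qmat s ⟨α + (j : ℕ), h⟩ rj else 0)


lemma abs_det_sub {ι κ τ τ' : Type*} [Fintype ι] [DecidableEq ι] [Fintype κ] [DecidableEq κ]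
    [Fintype τ] [DecidableEq τ] [Fintype τ'] [DecidableEq τ']
    (M : Matrix ι κ ℂ) (e : τ ≃ ι) (f : τ ≃ κ) (e' : τ' ≃ ι) (f' : τ' ≃ κ) :
    ‖(M.submatrix e f).det‖ = ‖(M.submatrix e' f').det‖ := by
  have h : M.submatrix e f
      = (M.submatrix e' f').submatrix (e.trans e'.symm) (f.trans f'.symm) := by
    ext i j; simp
  rw [h]
  set N := M.submatrix e' f'
  set a := e.trans e'.symm
  set b := f.trans f'.symm
  have h2 : N.submatrix a b = (N.submatrix a a).submatrix id (b.trans a.symm) := by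
    ext i j; simp
  rw [h2, Matrix.det_permute', Matrix.det_submatrix_equiv_self, norm_mul]
  rcases Int.units_eq_one_or (Equiv.Perm.sign (b.trans a.symm)) with hs | hs <;> simp [hs]
open Matrix Kronecker

lemma selBlocks_mul_apply {L R : ℕ} (sz : Fin R → ℕ) (h : ∀ m, sz m ≤ L)
    {κ : Type*} [Fintype κ] (M : Matrix (Fin R × Fin L) κ ℂ)
    (m : Fin R) (i : Fin (sz m)) (col : κ) :
    (selBlocks L R sz * M) ⟨m, i⟩ col = M (m, ⟨i, lt_of_lt_of_le i.2 (h m)⟩) col := by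
  rw [Matrix.mul_apply]
  rw [Finset.sum_eq_single (m, (⟨(i : ℕ), lt_of_lt_of_le i.2 (h m)⟩ : Fin L))]
  · simp [selBlocks]
  · rintro ⟨m', j⟩ _ hb
    simp only [selBlocks, Matrix.of_apply]
    rw [if_neg, zero_mul]
    rintro ⟨h1, h2⟩
    exact hb (by simp_all [Prod.ext_iff, Fin.ext_iff])
  · intro hmem; exact absurd (Finset.mem_univ _) hmem

lemma aVec_apply {L Q R : ℕ} (Qmat : Matrix (Fin L) (Fin Q) ℂ) (s : Fin R × Fin Q → ℂ)
    (iL : Fin L) (m : Fin R) (i : Fin L) :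
    aVec Qmat s iL (m, i) = if i = iL then ∑ t, Qmat i t * s (m, t) else 0 := by
  unfold aVec
  simp only [Matrix.mulVec, dotProduct, Fintype.sum_prod_type,
    Matrix.kroneckerMap_apply, Matrix.one_apply, Matrix.diagonal_mul, ite_mul, one_mul,
    zero_mul, mul_ite, mul_zero, mul_one]
  by_cases hi : i = iL <;> simp [hi, Finset.sum_ite_eq]
def eRow (L R : ℕ) (c : ℕ → ℕ) (hR : 2 ≤ R) (hcL : c (R-2) ≤ L)
    (hmono : ∀ i j : ℕ, i ≤ j → j ≤ R - 2 → c i ≤ c j) :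
    ((m : Fin R) × Fin (c (min (m:ℕ) (R-2)))) ⊕ Fin (L - c (R-2)) ≃
      ((m : Fin R) × Fin (if (m:ℕ) < R-1 then c (m:ℕ) else L)) where
  toFun x := match x with
    | Sum.inl ⟨m, i⟩ => ⟨m, ⟨(i:ℕ), by
        obtain ⟨iv, hiv⟩ := i
        simp only [Fin.val_mk]
        split
        · next hm => rwa [Nat.min_eq_left (by omega)] at hiv
        · exact lt_of_lt_of_le hiv (le_trans (hmono _ (R-2) (Nat.min_le_right _ _) le_rfl) hcL)⟩⟩
    | Sum.inr k => ⟨⟨R-1, by omega⟩, ⟨c (R-2) + (k:ℕ), by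
        have hk := k.2
        show c (R-2) + (k:ℕ) < if R-1 < R-1 then c (R-1) else L
        rw [if_neg (lt_irrefl _)]
        omega⟩⟩
  invFun := fun ⟨m, i⟩ => if h : (i : ℕ) < c (min (m : ℕ) (R-2)) then Sum.inl ⟨m, ⟨(i:ℕ), h⟩⟩
    else Sum.inr ⟨(i:ℕ) - c (R-2), by
      obtain ⟨iv, hiv⟩ := i
      simp only [Fin.val_mk] at h ⊢
      by_cases hm : (m : ℕ) < R - 1
      · rw [if_pos hm] at hiv
        rw [Nat.min_eq_left (by omega)] at h
        omega
      · rw [if_neg hm] at hiv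
        rw [Nat.min_eq_right (by omega)] at h
        omega⟩
  left_inv := by
    rintro (⟨m, i⟩ | k)
    · dsimp only
      rw [dif_pos i.2]
    · dsimp only
      rw [dif_neg (by rw [Nat.min_eq_right (by omega)]; omega)]
      congr 1
      exact Fin.ext (by simp)
  right_inv := by
    rintro ⟨m, ⟨iv, hiv⟩⟩
    dsimp only
    by_cases h : iv < c (min (m : ℕ) (R-2))
    · rw [dif_pos h]
    · rw [dif_neg h]
      have hm : (m : ℕ) = R - 1 := by
        by_cases hm' : (m : ℕ) < R - 1
        · rw [if_pos hm'] at hiv; rw [Nat.min_eq_left (by omega)] at h; omega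
        · have := m.2; omega
      have hK : c (R-2) ≤ iv := by
        rw [Nat.min_eq_right (by omega)] at h; omega
      rcases m with ⟨mv, hmv⟩
      simp only [Fin.val_mk] at hm hK h hiv ⊢
      subst hm
      congr 1
      exact Fin.ext (by simp; omega)

/-!
STATEMENT 6: Assume the sets `I_1, …, I_{R−1}` are initial segments `I_i = [1:c_i]` with
`α ≤ c_1 ≤ … ≤ c_{R−1} ≤ L`, `I_R = [1:L]`, and `Σ_{i∈[1:R]} |I_i| = QR + L − α`. Then
for every `s ∈ ℂ^{QR}`, `|det(J2(s))| = |det(J4(s))| · Π_{i=c_{R−1}+1}^{L} |q_i^T s_R|`.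
(The sizes `c_1, …, c_{R−1}` are encoded as `c 0, …, c (R-2)`; the determinants of the
square matrices `J2(s)` and `J4(s)` are computed after reindexing by arbitrary
equivalences `e2`, `e4`, which does not affect the absolute value of the determinant;
the product runs over the `Fin L`-indices `i` with `c (R-2) ≤ i` (0-based), i.e. over
`i ∈ [c_{R−1}+1 : L]` in 1-based indexing, and `s_R = s (R-1, ·)` is the last block
of `s`.) -/
theorem statement6 {L Q R α : ℕ} (hR : 2 ≤ R) (hRQ : R ≤ Q) (hQL : Q < L)
    (hα1 : 1 ≤ α) (hαL : α ≤ L)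
    (Qmat : Matrix (Fin L) (Fin Q) ℂ) (c : ℕ → ℕ)
    (hmono : ∀ i j : ℕ, i ≤ j → j ≤ R - 2 → c i ≤ c j)
    (hαc : α ≤ c 0) (hcL : c (R - 2) ≤ L)
    (hsum : (∑ i ∈ Finset.range (R - 1), c i) + L = Q * R + L - α)
    (e2 : ((Fin R × Fin Q) ⊕ Fin (L - α)) ≃
      ((m : Fin R) × Fin (if (m : ℕ) < R - 1 then c (m : ℕ) else L)))
    (e4 : ((Fin R × Fin Q) ⊕ Fin (c (R - 2) - α)) ≃
      ((m : Fin R) × Fin (c (min (m : ℕ) (R - 2))))) :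
    ∀ s : Fin R × Fin Q → ℂ,
      ‖((J2 L Q R α Qmat c s).submatrix e2 id).det‖
        = ‖((J4 L Q R α Qmat c s).submatrix e4 id).det‖ *
          ∏ i ∈ Finset.univ.filter (fun i : Fin L => c (R - 2) ≤ (i : ℕ)),
            ‖∑ t, Qmat i t * s (⟨R - 1, by omega⟩, t)‖ := by
  intro s
  have hαK : α ≤ c (R - 2) := le_trans hαc (hmono 0 (R-2) (by omega) le_rfl)
  -- column equivalence
  let EC : (((Fin R × Fin Q) ⊕ Fin (c (R - 2) - α)) ⊕ Fin (L - c (R - 2))) ≃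
      ((Fin R × Fin Q) ⊕ Fin (L - α)) :=
    (Equiv.sumAssoc (Fin R × Fin Q) (Fin (c (R - 2) - α)) (Fin (L - c (R - 2)))).trans
      ((Equiv.refl (Fin R × Fin Q)).sumCongr ((finSumFinEquiv).trans (finCongr (by omega))))
  -- row equivalence
  let e : (((Fin R × Fin Q) ⊕ Fin (c (R - 2) - α)) ⊕ Fin (L - c (R - 2))) ≃
      ((m : Fin R) × Fin (if (m : ℕ) < R - 1 then c (m : ℕ) else L)) :=
    (Equiv.sumCongr e4 (Equiv.refl (Fin (L - c (R - 2))))).trans (eRow L R c hR hcL hmono)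
  have hEC1 : ∀ p : Fin R × Fin Q, EC (Sum.inl (Sum.inl p)) = Sum.inl p := fun p => rfl
  have hEC2 : ∀ j : Fin (c (R - 2) - α), EC (Sum.inl (Sum.inr j))
      = Sum.inr ⟨(j:ℕ), by have := j.2; omega⟩ := by
    intro j
    simp [EC, finSumFinEquiv, Fin.castAdd, Fin.castLE, Fin.ext_iff]
  have hEC3 : ∀ k : Fin (L - c (R - 2)), EC (Sum.inr k)
      = Sum.inr ⟨(c (R - 2) - α) + (k:ℕ), by have := k.2; omega⟩ := by
    intro k
    simp [EC, finSumFinEquiv, Fin.natAdd, Fin.ext_iff]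
  have hsz2 : ∀ m : Fin R, (if (m:ℕ) < R-1 then c (m:ℕ) else L) ≤ L := by
    intro m; split
    · exact le_trans (hmono _ (R-2) (by omega) le_rfl) hcL
    · exact le_rfl
  have hsz4 : ∀ m : Fin R, c (min (m:ℕ) (R-2)) ≤ L :=
    fun m => le_trans (hmono _ (R-2) (Nat.min_le_right _ _) le_rfl) hcL
  have hs4K : ∀ m : Fin R, c (min (m:ℕ) (R-2)) ≤ c (R - 2) :=
    fun m => hmono _ (R-2) (Nat.min_le_right _ _) le_rfl
  have key : (J2 L Q R α Qmat c s).submatrix e EC =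
      Matrix.fromBlocks ((J4 L Q R α Qmat c s).submatrix e4 id)
        0
        (Matrix.of fun (k : Fin (L - c (R - 2))) y =>
          (J2 L Q R α Qmat c s) (e (Sum.inr k)) (EC (Sum.inl y)))
        (Matrix.diagonal fun k : Fin (L - c (R - 2)) =>
          ∑ t, Qmat ⟨c (R - 2) + (k:ℕ), by have := k.2; omega⟩ t * s (⟨R-1, by omega⟩, t)) := by
    ext x y
    rw [Matrix.submatrix_apply]
    cases x with
    | inl x =>
      have hx : e (Sum.inl x) = eRow L R c hR hcL hmono (Sum.inl (e4 x)) := rfl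
      rw [hx]
      set r := e4 x with hr
      clear_value r
      obtain ⟨m, i⟩ := r
      cases y with
      | inl y' =>
        rw [Matrix.fromBlocks_apply₁₁, Matrix.submatrix_apply, ← hr, id_eq]
        simp only [eRow, Equiv.coe_fn_mk]
        simp only [J2, J4]
        rw [selBlocks_mul_apply _ hsz2, selBlocks_mul_apply _ hsz4]
        cases y' with
        | inl p => rw [hEC1]; rfl
        | inr j =>
          rw [hEC2]
          rw [Matrix.fromCols_apply_inr, Matrix.fromCols_apply_inr,
            Matrix.of_apply, Matrix.of_apply]
          rw [dif_pos (by have := j.2; omega :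
            α + ((⟨(j:ℕ), by have := j.2; omega⟩ : Fin (L - α)):ℕ) < L)]
      | inr k =>
        rw [Matrix.fromBlocks_apply₁₂, hEC3]
        simp only [eRow, Equiv.coe_fn_mk]
        simp only [J2]
        rw [selBlocks_mul_apply _ hsz2]
        rw [Matrix.fromCols_apply_inr, Matrix.of_apply]
        rw [aVec_apply, if_neg, Matrix.zero_apply]
        have h1 := i.2
        have h2 := hs4K m
        simp only [Fin.ext_iff]
        omega
    | inr k =>
      cases y with
      | inl y' => rfl
      | inr k' =>
        rw [Matrix.fromBlocks_apply₂₂, hEC3]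
        have hx : e (Sum.inr k) = eRow L R c hR hcL hmono (Sum.inr k) := rfl
        rw [hx]
        simp only [eRow, Equiv.coe_fn_mk]
        simp only [J2]
        rw [selBlocks_mul_apply _ hsz2]
        rw [Matrix.fromCols_apply_inr, Matrix.of_apply]
        rw [aVec_apply, Matrix.diagonal_apply]
        have hk := k.2
        have hk' := k'.2
        by_cases hkk : k = k'
        · subst hkk
          rw [if_pos (by simp only [Fin.ext_iff]; omega), if_pos rfl]
        · rw [if_neg (by simp only [Fin.ext_iff] at hkk ⊢; omega), if_neg hkk]
  have habs := abs_det_sub (J2 L Q R α Qmat c s) e2 (Equiv.refl _) e EC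
  rw [show ((J2 L Q R α Qmat c s).submatrix e2 id)
      = (J2 L Q R α Qmat c s).submatrix e2 (Equiv.refl _) from rfl]
  rw [habs, key, Matrix.det_fromBlocks_zero₁₂, norm_mul, Matrix.det_diagonal, norm_prod]
  congr 1
  refine Finset.prod_nbij
    (fun k : Fin (L - c (R - 2)) => (⟨c (R - 2) + (k:ℕ), by have := k.2; omega⟩ : Fin L))
    ?_ ?_ ?_ ?_
  · intro a _; simp
  · intro a _ b _ hab
    simp only [Fin.ext_iff] at hab ⊢
    omega
  · intro b hb
    simp only [Finset.coe_filter, Set.mem_setOf_eq, Finset.mem_univ, true_and] at hb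
    refine ⟨⟨(b:ℕ) - c (R - 2), by have := b.2; omega⟩, by simp, ?_⟩
    simp only [Fin.ext_iff]
    omega
  · intro a _
    rfl
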